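/- The map sending ((u,v), (α,β,γ,δ)) ∈ ℂ² × ℂ⁴ to X · S(α,β,γ,δ) · X⁻¹, where X = 1 + u·E₁₂ + v·E₁₃ (so X is invertible with X⁻¹ = 1 − u·E₁₂ − v·E₁₃), is a bijection onto the set {A a 3×3 complex matrix : Tr A = 0, A₂₁ = 1, A₃₁ = 0}. Equivalently: for every traceless 3×3 complex matrix A with A₂₁ = 1 and A₃₁ = 0 there exists a unique pair (u,v) ∈ ℂ² such that (1 + uE₁₂ + vE₁₃) A (1 + uE₁₂ + vE₁₃)⁻¹ lies in the Slodowy slice 𝕊. (This is the Gan–Ginzburg isomorphism M × 𝕊 ≅ f + 𝔪^⊥ in the case 𝔤 = sl₃, f = E₂₁, 𝔪 = span{E₁₂, E₁₃}.) -/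

import Mathlib

open Matrix

/-- `E i j` is the 3×3 complex matrix with a `1` in position `(i,j)` and `0` elsewhere. -/
noncomputable def E (i j : Fin 3) : Matrix (Fin 3) (Fin 3) ℂ :=
  Matrix.single i j 1

/-- `Smat α β γ δ` is the element of the Slodowy slice `𝕊 = f + sl₃^e` (for the
sl₂-triple `e = E₁₂`, `h = E₁₁ − E₂₂`, `f = E₂₁` in `sl₃`) with rows
`(δ, α, β)`, `(1, δ, 0)`, `(0, γ, −2δ)`. -/
noncomputable def Smat (α β γ δ : ℂ) : Matrix (Fin 3) (Fin 3) ℂ :=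
  !![δ, α, β; 1, δ, 0; 0, γ, -2*δ]

/-- Explicit formula for conjugating a matrix by `1 + u·E₁₂ + v·E₁₃`. -/
lemma conj_eq (u v : ℂ) (A : Matrix (Fin 3) (Fin 3) ℂ) :
    (1 + u • E 0 1 + v • E 0 2) * A * (1 - u • E 0 1 - v • E 0 2) =
    !![A 0 0 + u * A 1 0 + v * A 2 0,
       A 0 1 + u * A 1 1 + v * A 2 1 - (A 0 0 + u * A 1 0 + v * A 2 0) * u,
       A 0 2 + u * A 1 2 + v * A 2 2 - (A 0 0 + u * A 1 0 + v * A 2 0) * v;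
       A 1 0, A 1 1 - A 1 0 * u, A 1 2 - A 1 0 * v;
       A 2 0, A 2 1 - A 2 0 * u, A 2 2 - A 2 0 * v] := by
  ext i j
  fin_cases i <;> fin_cases j <;>
    simp [E, Matrix.mul_apply, Fin.sum_univ_three, Matrix.single, Matrix.one_apply] <;>
    ring

/-- Explicit entries of the Gan–Ginzburg map. -/
lemma conj_Smat (u v α β γ δ : ℂ) :
    (1 + u • E 0 1 + v • E 0 2) * Smat α β γ δ * (1 - u • E 0 1 - v • E 0 2) =
    !![δ + u, α + u * δ + v * γ - (δ + u) * u, β + v * (-2*δ) - (δ + u) * v;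
       1, δ - u, -v;
       0, γ, -2*δ] := by
  rw [conj_eq]
  norm_num [Smat, Matrix.cons_val_two, Matrix.vecHead, Matrix.vecTail]

theorem ganGinzburg_sl3 :
    Set.BijOn
      (fun p : (ℂ × ℂ) × (ℂ × ℂ × ℂ × ℂ) =>
        (1 + p.1.1 • E 0 1 + p.1.2 • E 0 2) *
          Smat p.2.1 p.2.2.1 p.2.2.2.1 p.2.2.2.2 *
        (1 - p.1.1 • E 0 1 - p.1.2 • E 0 2))
      Set.univ
      {A : Matrix (Fin 3) (Fin 3) ℂ | A.trace = 0 ∧ A 1 0 = 1 ∧ A 2 0 = 0} ∧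
    ∀ A : Matrix (Fin 3) (Fin 3) ℂ, A.trace = 0 → A 1 0 = 1 → A 2 0 = 0 →
      ∃! uv : ℂ × ℂ, ∃ α β γ δ : ℂ,
        (1 + uv.1 • E 0 1 + uv.2 • E 0 2) * A * (1 - uv.1 • E 0 1 - uv.2 • E 0 2) =
          Smat α β γ δ := by
  constructor
  · refine ⟨?_, ?_, ?_⟩
    · rintro ⟨⟨u, v⟩, α, β, γ, δ⟩ -
      refine ⟨?_, ?_, ?_⟩ <;> simp [conj_Smat, Matrix.trace_fin_three] <;> ring
    · rintro ⟨⟨u, v⟩, α, β, γ, δ⟩ - ⟨⟨u', v'⟩, α', β', γ', δ'⟩ - h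
      simp only [conj_Smat] at h
      have h00 := congrFun (congrFun h 0) 0
      have h01 := congrFun (congrFun h 0) 1
      have h02 := congrFun (congrFun h 0) 2
      have h11 := congrFun (congrFun h 1) 1
      have h12 := congrFun (congrFun h 1) 2
      have h21 := congrFun (congrFun h 2) 1
      simp at h00 h01 h02 h11 h12 h21
      have hv : v = v' := h12
      have hu : u = u' := by linear_combination (h00 - h11) / 2
      have hδ : δ = δ' := by linear_combination (h00 + h11) / 2
      have hγ : γ = γ' := h21
      have hα : α = α' := by subst hv hu hδ hγ; linear_combination h01
      have hβ : β = β' := by subst hv hu hδ hγ; linear_combination h02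
      subst hv hu hδ hγ hα hβ; rfl
    · rintro A ⟨htr, h10, h20⟩
      obtain ⟨a, b, c, d, e, f, g, k, i, rfl⟩ :
          ∃ a b c d e f g k i, A = !![a, b, c; d, e, f; g, k, i] :=
        ⟨_, _, _, _, _, _, _, _, _, Matrix.eta_fin_three A⟩
      rw [Matrix.trace_fin_three] at htr
      simp at htr h10 h20
      subst h10 h20
      refine ⟨⟨⟨-((e - a) / 2), -f⟩,
        b + (e - a) / 2 * e + f * k - (a + (e - a) / 2) * ((e - a) / 2),
        c + (e - a) / 2 * f + f * i - (a + (e - a) / 2) * f,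
        k, (a + e) / 2⟩, Set.mem_univ _, ?_⟩
      simp only [conj_Smat]
      ext x y
      fin_cases x <;> fin_cases y
      all_goals try simp
      all_goals first
        | ring1
        | linear_combination htr
        | linear_combination -htr
        | linear_combination f * htr
        | linear_combination -f * htr
  · intro A htr h10 h20
    obtain ⟨a, b, c, d, e, f, g, k, i, rfl⟩ :
        ∃ a b c d e f g k i, A = !![a, b, c; d, e, f; g, k, i] :=
      ⟨_, _, _, _, _, _, _, _, _, Matrix.eta_fin_three A⟩
    rw [Matrix.trace_fin_three] at htr
    simp at htr h10 h20
    subst h10 h20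
    refine ⟨⟨(e - a) / 2, f⟩, ?_, ?_⟩
    · refine ⟨b + (e - a) / 2 * e + f * k - (a + (e - a) / 2) * ((e - a) / 2),
        c + (e - a) / 2 * f + f * i - (a + (e - a) / 2) * f,
        k, (a + e) / 2, ?_⟩
      rw [conj_eq]
      unfold Smat
      ext x y
      fin_cases x <;> fin_cases y
      all_goals try simp
      all_goals first
        | ring1
        | linear_combination htr
        | linear_combination -htr
        | linear_combination f * htr
        | linear_combination -f * htr
    · rintro ⟨u', v'⟩ ⟨α, β, γ, δ, h⟩
      rw [conj_eq] at h
      have h00 := congrFun (congrFun h 0) 0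
      have h11 := congrFun (congrFun h 1) 1
      have h12 := congrFun (congrFun h 1) 2
      simp [Smat] at h00 h11 h12
      refine Prod.ext ?_ ?_
      · show u' = (e - a) / 2
        linear_combination (h00 - h11) / 2
      · show v' = f
        linear_combination -h12
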